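/- Per-step interior-point cost update bound: in a finite discounted MDP, let δ > 0, t > 0, let C : S → A → ℝ be a cost signal, and let π, π' be policies with (π s a = 0 → π' s a = 0) such that D̄_KL(π'‖π) ≤ δ and 𝔸_C(π,π') ≤ 1/t (as holds when π' is a 1/t-suboptimal solution of the trust-region cost-minimization subproblem via the interior-point method). Then J_C(π') − J_C(π) ≤ 1/((1−γ)·t) + √(2δ) · γ · ε_C(π,π') / (1−γ)². -/

import Mathlib

open Real BigOperators

/-- Induced transition matrix of policy `pol`: `P_pol(s,s') = ∑ a, pol s a * P s a s'`. -/
noncomputable def transMat {S A : Type*} [Fintype A] (P : S → A → S → ℝ)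
    (pol : S → A → ℝ) : Matrix S S ℝ :=
  fun s s' => ∑ a, pol s a * P s a s'

/-- Discounted state visitation distribution
`d_pol(s) = (1-γ) ∑ₜ γ^t ∑_{s0} ρ0 s0 * (P_pol^t)(s0,s)`. -/
noncomputable def dVisit {S A : Type*} [Fintype S] [DecidableEq S] [Fintype A]
    (P : S → A → S → ℝ) (γ : ℝ) (ρ0 : S → ℝ) (pol : S → A → ℝ) (s : S) : ℝ :=
  (1 - γ) * ∑' t : ℕ, γ ^ t * ∑ s0, ρ0 s0 * (transMat P pol ^ t) s0 s

/-- Value function of signal `F` under policy `pol`. -/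
noncomputable def Vfun {S A : Type*} [Fintype S] [DecidableEq S] [Fintype A]
    (P : S → A → S → ℝ) (γ : ℝ) (F : S → A → ℝ) (pol : S → A → ℝ) (s : S) : ℝ :=
  ∑' t : ℕ, γ ^ t * ∑ s', (transMat P pol ^ t) s s' * ∑ a, pol s' a * F s' a

/-- Return `J_F(pol) = ∑ s, ρ0 s * V_F^pol(s)`. -/
noncomputable def Jret {S A : Type*} [Fintype S] [DecidableEq S] [Fintype A]
    (P : S → A → S → ℝ) (γ : ℝ) (ρ0 : S → ℝ) (F : S → A → ℝ) (pol : S → A → ℝ) : ℝ :=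
  ∑ s, ρ0 s * Vfun P γ F pol s

/-- Action-value function `Q_F^pol(s,a) = F s a + γ ∑_{s'} P s a s' * V_F^pol(s')`. -/
noncomputable def Qfun {S A : Type*} [Fintype S] [DecidableEq S] [Fintype A]
    (P : S → A → S → ℝ) (γ : ℝ) (F : S → A → ℝ) (pol : S → A → ℝ) (s : S) (a : A) : ℝ :=
  F s a + γ * ∑ s', P s a s' * Vfun P γ F pol s'

/-- Advantage function `A_F^pol(s,a) = Q_F^pol(s,a) - V_F^pol(s)`. -/
noncomputable def Adv {S A : Type*} [Fintype S] [DecidableEq S] [Fintype A]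
    (P : S → A → S → ℝ) (γ : ℝ) (F : S → A → ℝ) (pol : S → A → ℝ) (s : S) (a : A) : ℝ :=
  Qfun P γ F pol s a - Vfun P γ F pol s

/-- Expected surrogate advantage
`𝔸_F(pol,pol') = ∑ s, d_pol(s) ∑ a, pol' s a * A_F^pol(s,a)`. -/
noncomputable def surrAdv {S A : Type*} [Fintype S] [DecidableEq S] [Fintype A]
    (P : S → A → S → ℝ) (γ : ℝ) (ρ0 : S → ℝ) (F : S → A → ℝ)
    (pol pol' : S → A → ℝ) : ℝ :=
  ∑ s, dVisit P γ ρ0 pol s * ∑ a, pol' s a * Adv P γ F pol s a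

/-- `ε_F(pol,pol') = max_s |∑ a, pol' s a * A_F^pol(s,a)|`. -/
noncomputable def epsAdv {S A : Type*} [Fintype S] [DecidableEq S] [Fintype A] [Nonempty S]
    (P : S → A → S → ℝ) (γ : ℝ) (F : S → A → ℝ) (pol pol' : S → A → ℝ) : ℝ :=
  Finset.univ.sup' Finset.univ_nonempty fun s => |∑ a, pol' s a * Adv P γ F pol s a|

/-- Per-state KL divergence `KL(pol'‖pol)(s) = ∑ a, pol' s a * log (pol' s a / pol s a)`
(with the convention `0 * log 0 = 0`, automatic since `Real.log 0 = 0`). -/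
noncomputable def klState {S A : Type*} [Fintype A] (pol' pol : S → A → ℝ) (s : S) : ℝ :=
  ∑ a, pol' s a * Real.log (pol' s a / pol s a)

/-- Averaged KL divergence `D̄_KL(pol'‖pol) = ∑ s, d_pol(s) * KL(pol'‖pol)(s)`. -/
noncomputable def avgKL {S A : Type*} [Fintype S] [DecidableEq S] [Fintype A]
    (P : S → A → S → ℝ) (γ : ℝ) (ρ0 : S → ℝ) (pol' pol : S → A → ℝ) : ℝ :=
  ∑ s, dVisit P γ ρ0 pol s * klState pol' pol s



set_option linter.unusedSectionVars false

section Auxiliary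


noncomputable def gfun (x : ℝ) : ℝ := x * Real.log x - x + 1 - 3*(x-1)^2/(2*(x+2))
noncomputable def ufun (x : ℝ) : ℝ := Real.log x - (3/2)*((x-1)*(x+5))/(x+2)^2

lemma hasDerivAt_gfun {x : ℝ} (hx : 0 < x) : HasDerivAt gfun (ufun x) x := by
  have h2 : x + 2 ≠ 0 := by nlinarith
  have h1 : HasDerivAt (fun y : ℝ => y * Real.log y) (Real.log x + 1) x := by
    have := (Real.hasDerivAt_log hx.ne').const_mul x
    have h := (hasDerivAt_id x).mul (Real.hasDerivAt_log hx.ne')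
    exact h.congr_deriv (by
      simp [hx.ne'])
  have h3 : HasDerivAt (fun y : ℝ => 3*(y-1)^2/(2*(y+2)))
      ((3*(2*(x-1))*(2*(x+2)) - 3*(x-1)^2*2)/(2*(x+2))^2) x := by
    have hnum : HasDerivAt (fun y : ℝ => 3*(y-1)^2) (3*(2*(x-1))) x := by
      have := ((hasDerivAt_id x).sub_const 1).pow 2
      simpa [mul_comm, mul_assoc, mul_left_comm] using this.const_mul 3
    have hden : HasDerivAt (fun y : ℝ => 2*(y+2)) 2 x := by
      simpa using ((hasDerivAt_id x).add_const 2).const_mul 2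
    exact hnum.div hden (by simpa using h2)
  have := ((h1.sub (hasDerivAt_id x)).add_const 1).sub h3
  have heq : (Real.log x + 1 - 1) - ((3*(2*(x-1))*(2*(x+2)) - 3*(x-1)^2*2)/(2*(x+2))^2) = ufun x := by
    unfold ufun
    field_simp
    ring
  rw [heq] at this
  exact this.congr_of_eventuallyEq (by filter_upwards with y; simp only [gfun, id_eq, Pi.sub_apply, Pi.add_apply])

lemma hasDerivAt_ufun {x : ℝ} (hx : 0 < x) :
    HasDerivAt ufun (1/x - 27/(x+2)^3) x := by
  have h2 : (0:ℝ) < x + 2 := by linarith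
  have hlog := Real.hasDerivAt_log hx.ne'
  have hfrac : HasDerivAt (fun y : ℝ => (3/2)*((y-1)*(y+5))/(y+2)^2)
      ((((3/2)*((x+5)+(x-1)))*(x+2)^2 - (3/2)*((x-1)*(x+5))*(2*(x+2)))/((x+2)^2)^2) x := by
    have hnum : HasDerivAt (fun y : ℝ => (3/2)*((y-1)*(y+5))) ((3/2)*((x+5)+(x-1))) x := by
      have := (((hasDerivAt_id x).sub_const 1).mul ((hasDerivAt_id x).add_const 5)).const_mul
        ((3:ℝ)/2)
      simpa [mul_comm, mul_add, one_mul, id_eq] using this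
    have hden : HasDerivAt (fun y : ℝ => (y+2)^2) (2*(x+2)) x := by
      have := ((hasDerivAt_id x).add_const 2).pow 2
      simp [mul_comm] at this
      exact this
    exact hnum.div hden (by positivity)
  have := hlog.sub hfrac
  have heq : x⁻¹ - (((3/2)*((x+5)+(x-1)))*(x+2)^2 - (3/2)*((x-1)*(x+5))*(2*(x+2)))/((x+2)^2)^2
      = 1/x - 27/(x+2)^3 := by
    field_simp
    ring
  rw [heq] at this
  exact this.congr_of_eventuallyEq (by filter_upwards with y; simp only [ufun, Pi.sub_apply])

lemma ufun_deriv_nonneg {x : ℝ} (hx : 0 < x) : 0 ≤ 1/x - 27/(x+2)^3 := by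
  rw [sub_nonneg, div_le_div_iff₀ (by positivity) hx]
  nlinarith [sq_nonneg (x-1), hx.le]

lemma ufun_mono : MonotoneOn ufun (Set.Ioi 0) := by
  apply monotoneOn_of_deriv_nonneg (convex_Ioi 0)
  · intro x hx
    exact (hasDerivAt_ufun hx).continuousAt.continuousWithinAt
  · intro x hx
    rw [interior_Ioi] at hx
    exact (hasDerivAt_ufun hx).differentiableAt.differentiableWithinAt
  · intro x hx
    rw [interior_Ioi] at hx
    rw [(hasDerivAt_ufun hx).deriv]
    exact ufun_deriv_nonneg hx

lemma ufun_one : ufun 1 = 0 := by simp [ufun]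

lemma gfun_one : gfun 1 = 0 := by simp [gfun]

lemma gfun_nonneg {x : ℝ} (hx : 0 ≤ x) : 0 ≤ gfun x := by
  rcases eq_or_lt_of_le hx with h | hx'
  · simp [gfun, ← h]
    norm_num
  rcases le_or_gt 1 x with h1 | h1
  · -- monotone on Ici 1
    have hmono : MonotoneOn gfun (Set.Ici 1) := by
      apply monotoneOn_of_deriv_nonneg (convex_Ici 1)
      · intro y hy
        exact (hasDerivAt_gfun (by simp at hy; linarith)).continuousAt.continuousWithinAt
      · intro y hy
        rw [interior_Ici] at hy
        exact (hasDerivAt_gfun (by simp at hy; linarith)).differentiableAt.differentiableWithinAt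
      · intro y hy
        rw [interior_Ici] at hy
        have hy1 : (1:ℝ) < y := hy
        rw [(hasDerivAt_gfun (by linarith)).deriv]
        have := ufun_mono (Set.mem_Ioi.2 one_pos) (Set.mem_Ioi.2 (by linarith : (0:ℝ) < y)) hy1.le
        rw [ufun_one] at this
        exact this
    have := hmono (Set.self_mem_Ici) (Set.mem_Ici.2 h1) h1
    rwa [gfun_one] at this
  · -- antitone on Icc x 1, x < 1
    have hanti : AntitoneOn gfun (Set.Icc x 1) := by
      apply antitoneOn_of_deriv_nonpos (convex_Icc x 1)
      · intro y hy
        exact (hasDerivAt_gfun (lt_of_lt_of_le hx' hy.1)).continuousAt.continuousWithinAt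
      · intro y hy
        rw [interior_Icc] at hy
        exact (hasDerivAt_gfun (lt_of_lt_of_le hx' hy.1.le)).differentiableAt.differentiableWithinAt
      · intro y hy
        rw [interior_Icc] at hy
        have hy0 : 0 < y := lt_trans hx' hy.1
        rw [(hasDerivAt_gfun hy0).deriv]
        have := ufun_mono (Set.mem_Ioi.2 hy0) (Set.mem_Ioi.2 one_pos) hy.2.le
        rw [ufun_one] at this
        exact this
    have := hanti (Set.mem_Icc.2 ⟨le_refl x, h1.le⟩) (Set.mem_Icc.2 ⟨h1.le, le_refl 1⟩) h1.le
    rwa [gfun_one] at this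

lemma pointwise_kl {p q : ℝ} (hp : 0 ≤ p) (hq : 0 ≤ q) (habs : q = 0 → p = 0) :
    3*(p-q)^2/(2*(p+2*q)) ≤ p * Real.log (p/q) - p + q := by
  rcases eq_or_lt_of_le hq with h | hq'
  · rw [habs h.symm, ← h]; norm_num
  · have key : p * Real.log (p/q) - p + q - 3*(p-q)^2/(2*(p+2*q)) = q * gfun (p/q) := by
      simp only [gfun]
      rw [show p/q * Real.log (p/q) = (p * Real.log (p/q))/q by ring]
      have h2 : p + 2*q > 0 := by linarith
      have hpq2 : p/q + 2 > 0 := by positivity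
      field_simp
    nlinarith [mul_nonneg hq'.le (gfun_nonneg (div_nonneg hp hq'.le))]

lemma pinsker_fin {A : Type*} [Fintype A] (p q : A → ℝ)
    (hp0 : ∀ a, 0 ≤ p a) (hq0 : ∀ a, 0 ≤ q a)
    (hp1 : ∑ a, p a = 1) (hq1 : ∑ a, q a = 1)
    (habs : ∀ a, q a = 0 → p a = 0) :
    (∑ a, |p a - q a|)^2 ≤ 2 * ∑ a, p a * Real.log (p a / q a) := by
  set w : A → ℝ := fun a => p a + 2 * q a with hw
  have hw0 : ∀ a, 0 ≤ w a := fun a => by have := hp0 a; have := hq0 a; simp [hw]; linarith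
  have hw3 : ∑ a, w a = 3 := by
    simp [hw, Finset.sum_add_distrib, hp1, ← Finset.mul_sum, hq1]; norm_num
  have hCS : (∑ a, |p a - q a|)^2 ≤ (∑ a, (p a - q a)^2 / w a) * 3 := by
    have := Finset.sum_mul_sq_le_sq_mul_sq Finset.univ
      (fun a => |p a - q a| / Real.sqrt (w a)) (fun a => Real.sqrt (w a))
    have h1 : ∀ a : A, |p a - q a| / Real.sqrt (w a) * Real.sqrt (w a) = |p a - q a| := by
      intro a
      rcases eq_or_lt_of_le (hw0 a) with h | h
      · have hq : q a = 0 := by have := hp0 a; have := hq0 a; simp [hw] at h; linarith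
        have hp : p a = 0 := habs a hq
        simp [hp, hq]
      · rw [div_mul_cancel₀]
        exact (Real.sqrt_pos.2 h).ne'
    have h2 : ∀ a : A, (|p a - q a| / Real.sqrt (w a))^2 = (p a - q a)^2 / w a := by
      intro a
      rw [div_pow, sq_abs, Real.sq_sqrt (hw0 a)]
    have h3 : ∀ a : A, (Real.sqrt (w a))^2 = w a := fun a => Real.sq_sqrt (hw0 a)
    calc (∑ a, |p a - q a|)^2
        = (∑ a, |p a - q a| / Real.sqrt (w a) * Real.sqrt (w a))^2 := by
          congr 1; exact Finset.sum_congr rfl fun a _ => (h1 a).symm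
      _ ≤ (∑ a, (|p a - q a| / Real.sqrt (w a))^2) * ∑ a, (Real.sqrt (w a))^2 := this
      _ = (∑ a, (p a - q a)^2 / w a) * 3 := by
          rw [Finset.sum_congr rfl fun a _ => h2 a, Finset.sum_congr rfl fun a _ => h3 a, hw3]
  have hpt : ∀ a : A, (p a - q a)^2 / w a ≤ (2/3) * (p a * Real.log (p a / q a) - p a + q a) := by
    intro a
    have hthis := pointwise_kl (hp0 a) (hq0 a) (habs a)
    rcases eq_or_lt_of_le (hw0 a) with h | h
    · have hq : q a = 0 := by have := hp0 a; have := hq0 a; simp [hw] at h; linarith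
      have hp : p a = 0 := habs a hq
      simp [hp, hq, hw]
    · have h2 : (0:ℝ) < p a + 2*q a := by simpa [hw] using h
      have heq : (p a - q a)^2 / w a = (2/3)*(3*(p a - q a)^2/(2*(p a+2*q a))) := by
        simp only [hw]
        field_simp
      rw [heq]
      have := mul_le_mul_of_nonneg_left hthis (by norm_num : (0:ℝ) ≤ 2/3)
      linarith
  have hsum : ∑ a, (p a - q a)^2 / w a ≤ (2/3) * ∑ a, p a * Real.log (p a / q a) := by
    calc ∑ a, (p a - q a)^2 / w a
        ≤ ∑ a, (2/3) * (p a * Real.log (p a / q a) - p a + q a) :=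
          Finset.sum_le_sum fun a _ => hpt a
      _ = (2/3) * ∑ a, p a * Real.log (p a / q a) := by
          rw [← Finset.mul_sum]
          congr 1
          simp [Finset.sum_add_distrib, Finset.sum_sub_distrib, hp1, hq1]
  nlinarith [hCS, hsum]

lemma jensen_sqrt {S : Type*} [Fintype S] (d x : S → ℝ)
    (hd0 : ∀ s, 0 ≤ d s) (hd1 : ∑ s, d s = 1) (hx : ∀ s, 0 ≤ x s) :
    ∑ s, d s * Real.sqrt (x s) ≤ Real.sqrt (∑ s, d s * x s) := by
  have hCS := Finset.sum_mul_sq_le_sq_mul_sq Finset.univ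
    (fun s => Real.sqrt (d s)) (fun s => Real.sqrt (d s * x s))
  have h1 : ∀ s : S, Real.sqrt (d s) * Real.sqrt (d s * x s) = d s * Real.sqrt (x s) := by
    intro s
    rw [← Real.sqrt_mul (hd0 s), ← mul_assoc, Real.sqrt_mul (mul_nonneg (hd0 s) (hd0 s)),
      Real.sqrt_mul_self (hd0 s)]
  rw [Finset.sum_congr rfl fun s _ => h1 s] at hCS
  have h2 : ∀ s : S, (Real.sqrt (d s))^2 = d s := fun s => Real.sq_sqrt (hd0 s)
  have h3 : ∀ s : S, (Real.sqrt (d s * x s))^2 = d s * x s :=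
    fun s => Real.sq_sqrt (mul_nonneg (hd0 s) (hx s))
  rw [Finset.sum_congr rfl fun s _ => h2 s, Finset.sum_congr rfl fun s _ => h3 s, hd1,
    one_mul] at hCS
  have hnn : 0 ≤ ∑ s, d s * Real.sqrt (x s) :=
    Finset.sum_nonneg fun s _ => mul_nonneg (hd0 s) (Real.sqrt_nonneg _)
  exact (Real.le_sqrt hnn (Finset.sum_nonneg fun s _ => mul_nonneg (hd0 s) (hx s))).2 hCS


section MDPaux

variable {S A : Type*} [Fintype S] [DecidableEq S] [Fintype A]
variable {P : S → A → S → ℝ} {pol : S → A → ℝ} {γ : ℝ}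

lemma transMat_pow_nonneg (hP0 : ∀ s a s', 0 ≤ P s a s') (hpol0 : ∀ s a, 0 ≤ pol s a)
    (t : ℕ) (s s' : S) : 0 ≤ (transMat P pol ^ t) s s' := by
  induction t generalizing s s' with
  | zero => simp [Matrix.one_apply]; positivity
  | succ n ih =>
    rw [pow_succ]
    exact Finset.sum_nonneg fun u _ => mul_nonneg (ih s u)
      (Finset.sum_nonneg fun a _ => mul_nonneg (hpol0 u a) (hP0 u a s'))

lemma transMat_rowsum (hP1 : ∀ s a, ∑ s', P s a s' = 1) (hpol1 : ∀ s, ∑ a, pol s a = 1)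
    (s : S) : ∑ s', transMat P pol s s' = 1 := by
  unfold transMat
  rw [Finset.sum_comm]
  simp_rw [← Finset.mul_sum, hP1]
  simpa using hpol1 s

lemma transMat_pow_rowsum (hP1 : ∀ s a, ∑ s', P s a s' = 1) (hpol1 : ∀ s, ∑ a, pol s a = 1)
    (t : ℕ) (s : S) : ∑ s', (transMat P pol ^ t) s s' = 1 := by
  induction t generalizing s with
  | zero => simp [Matrix.one_apply]
  | succ n ih =>
    rw [pow_succ]
    have : ∀ s', (transMat P pol ^ n * transMat P pol) s s'
        = ∑ u, (transMat P pol ^ n) s u * transMat P pol u s' := fun s' => rfl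
    simp_rw [this]
    rw [Finset.sum_comm]
    simp_rw [← Finset.mul_sum, transMat_rowsum hP1 hpol1]
    simpa using ih s

lemma transMat_pow_le_one (hP0 : ∀ s a s', 0 ≤ P s a s') (hP1 : ∀ s a, ∑ s', P s a s' = 1)
    (hpol0 : ∀ s a, 0 ≤ pol s a) (hpol1 : ∀ s, ∑ a, pol s a = 1)
    (t : ℕ) (s s' : S) : (transMat P pol ^ t) s s' ≤ 1 := by
  rw [← transMat_pow_rowsum hP1 hpol1 t s]
  exact Finset.single_le_sum (fun u _ => transMat_pow_nonneg hP0 hpol0 t s u)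
    (Finset.mem_univ s')

lemma summable_geo_mul (hγ0 : 0 ≤ γ) (hγ1 : γ < 1) (c : ℕ → ℝ) (B : ℝ)
    (hc : ∀ t, |c t| ≤ B) : Summable (fun t => γ ^ t * c t) := by
  apply Summable.of_norm
  apply Summable.of_nonneg_of_le (fun t => norm_nonneg _) (fun t => ?_)
    (((summable_geometric_of_lt_one hγ0 hγ1)).mul_left B)
  rw [Real.norm_eq_abs, abs_mul, abs_pow, abs_of_nonneg hγ0, mul_comm (B : ℝ)]
  exact mul_le_mul_of_nonneg_left (hc t) (by positivity)

end MDPaux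
section MDPcore

variable {S A : Type*} [Fintype S] [DecidableEq S] [Fintype A]
variable {P : S → A → S → ℝ} {pol : S → A → ℝ} {γ : ℝ} {ρ0 : S → ℝ}

lemma summable_V (hP0 : ∀ s a s', 0 ≤ P s a s') (hP1 : ∀ s a, ∑ s', P s a s' = 1)
    (hpol0 : ∀ s a, 0 ≤ pol s a) (hpol1 : ∀ s, ∑ a, pol s a = 1)
    (hγ0 : 0 ≤ γ) (hγ1 : γ < 1) (r : S → ℝ) (s : S) :
    Summable (fun t : ℕ => γ ^ t * ∑ s', (transMat P pol ^ t) s s' * r s') := by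
  apply summable_geo_mul hγ0 hγ1 _ (∑ s', |r s'|)
  intro t
  calc |∑ s', (transMat P pol ^ t) s s' * r s'| ≤ ∑ s', |(transMat P pol ^ t) s s' * r s'| :=
        Finset.abs_sum_le_sum_abs _ _
    _ ≤ ∑ s', |r s'| := by
        apply Finset.sum_le_sum
        intro s' _
        rw [abs_mul, abs_of_nonneg (transMat_pow_nonneg hP0 hpol0 t s s')]
        exact mul_le_of_le_one_left (abs_nonneg _) (transMat_pow_le_one hP0 hP1 hpol0 hpol1 t s s')

lemma summable_d (hP0 : ∀ s a s', 0 ≤ P s a s') (hP1 : ∀ s a, ∑ s', P s a s' = 1)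
    (hpol0 : ∀ s a, 0 ≤ pol s a) (hpol1 : ∀ s, ∑ a, pol s a = 1)
    (hγ0 : 0 ≤ γ) (hγ1 : γ < 1) (hρ0 : ∀ s, 0 ≤ ρ0 s) (s : S) :
    Summable (fun t : ℕ => γ ^ t * ∑ s0, ρ0 s0 * (transMat P pol ^ t) s0 s) := by
  apply summable_geo_mul hγ0 hγ1 _ (∑ s0, ρ0 s0)
  intro t
  rw [abs_of_nonneg (Finset.sum_nonneg fun s0 _ =>
    mul_nonneg (hρ0 s0) (transMat_pow_nonneg hP0 hpol0 t s0 s))]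
  apply Finset.sum_le_sum
  intro s0 _
  exact mul_le_of_le_one_right (hρ0 s0) (transMat_pow_le_one hP0 hP1 hpol0 hpol1 t s0 s)

lemma Vfun_eq_tsum (F : S → A → ℝ) (s : S) :
    Vfun P γ F pol s
      = ∑' t : ℕ, γ ^ t * ∑ s', (transMat P pol ^ t) s s' * ∑ a, pol s' a * F s' a := rfl

lemma Vfun_bellman (hP0 : ∀ s a s', 0 ≤ P s a s') (hP1 : ∀ s a, ∑ s', P s a s' = 1)
    (hpol0 : ∀ s a, 0 ≤ pol s a) (hpol1 : ∀ s, ∑ a, pol s a = 1)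
    (hγ0 : 0 ≤ γ) (hγ1 : γ < 1) (F : S → A → ℝ) (s : S) :
    Vfun P γ F pol s = (∑ a, pol s a * F s a)
      + γ * ∑ s', transMat P pol s s' * Vfun P γ F pol s' := by
  set r : S → ℝ := fun s' => ∑ a, pol s' a * F s' a with hr
  set M := transMat P pol with hM
  set w : ℕ → S → ℝ := fun t u => ∑ s', (M ^ t) u s' * r s' with hwdef
  have hsum : ∀ u, Summable (fun t : ℕ => γ ^ t * w t u) :=
    fun u => summable_V hP0 hP1 hpol0 hpol1 hγ0 hγ1 r u
  have hw0 : w 0 s = r s := by simp [hwdef, Matrix.one_apply]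
  have hwsucc : ∀ t u, w (t+1) u = ∑ s', M u s' * w t s' := by
    intro t u
    simp only [hwdef, pow_succ', Matrix.mul_apply, Finset.sum_mul]
    rw [Finset.sum_comm]
    apply Finset.sum_congr rfl
    intro s' _
    rw [Finset.mul_sum]
    apply Finset.sum_congr rfl
    intro s'' _
    ring
  have := Summable.tsum_eq_zero_add (hsum s)
  rw [Vfun_eq_tsum]
  calc (∑' t : ℕ, γ ^ t * w t s)
      = γ ^ 0 * w 0 s + ∑' t : ℕ, γ ^ (t+1) * w (t+1) s := Summable.tsum_eq_zero_add (hsum s)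
    _ = r s + γ * ∑' t : ℕ, γ ^ t * w (t+1) s := by
        rw [pow_zero, one_mul, hw0]
        congr 1
        rw [← tsum_mul_left]
        apply tsum_congr
        intro t
        ring
    _ = r s + γ * ∑ s', M s s' * Vfun P γ F pol s' := by
        congr 1
        congr 1
        have h1 : ∀ t : ℕ, γ ^ t * w (t+1) s = ∑ s', M s s' * (γ ^ t * w t s') := by
          intro t
          rw [hwsucc t s, Finset.mul_sum]
          apply Finset.sum_congr rfl
          intro s' _
          ring
        rw [tsum_congr h1, Summable.tsum_finsetSum (fun s' _ => (hsum s').mul_left (M s s'))]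
        apply Finset.sum_congr rfl
        intro s' _
        rw [tsum_mul_left, Vfun_eq_tsum]

end MDPcore
section MDPd

variable {S A : Type*} [Fintype S] [DecidableEq S] [Fintype A]
variable {P : S → A → S → ℝ} {pol : S → A → ℝ} {γ : ℝ} {ρ0 : S → ℝ}

lemma dVisit_nonneg (hP0 : ∀ s a s', 0 ≤ P s a s') (hpol0 : ∀ s a, 0 ≤ pol s a)
    (hγ1 : γ ≤ 1) (hρ0 : ∀ s, 0 ≤ ρ0 s) (hγ0 : 0 ≤ γ) (s : S) :
    0 ≤ dVisit P γ ρ0 pol s := by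
  apply mul_nonneg (by linarith)
  apply tsum_nonneg
  intro t
  apply mul_nonneg (by positivity)
  exact Finset.sum_nonneg fun s0 _ => mul_nonneg (hρ0 s0) (transMat_pow_nonneg hP0 hpol0 t s0 s)

lemma dVisit_sum_one (hP0 : ∀ s a s', 0 ≤ P s a s') (hP1 : ∀ s a, ∑ s', P s a s' = 1)
    (hpol0 : ∀ s a, 0 ≤ pol s a) (hpol1 : ∀ s, ∑ a, pol s a = 1)
    (hγ0 : 0 ≤ γ) (hγ1 : γ < 1) (hρ0 : ∀ s, 0 ≤ ρ0 s) (hρ1 : ∑ s, ρ0 s = 1) :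
    ∑ s, dVisit P γ ρ0 pol s = 1 := by
  unfold dVisit
  rw [← Finset.mul_sum,
    ← Summable.tsum_finsetSum (fun s _ => summable_d hP0 hP1 hpol0 hpol1 hγ0 hγ1 hρ0 s)]
  have : ∀ t : ℕ, (∑ s, γ ^ t * ∑ s0, ρ0 s0 * (transMat P pol ^ t) s0 s) = γ ^ t := by
    intro t
    rw [← Finset.mul_sum, Finset.sum_comm]
    simp_rw [← Finset.mul_sum, transMat_pow_rowsum hP1 hpol1 t]
    simp [hρ1]
  rw [tsum_congr this, tsum_geometric_of_lt_one hγ0 hγ1]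
  exact mul_inv_cancel₀ (sub_ne_zero.2 (ne_of_gt (by linarith)))

lemma dVisit_flow (hP0 : ∀ s a s', 0 ≤ P s a s') (hP1 : ∀ s a, ∑ s', P s a s' = 1)
    (hpol0 : ∀ s a, 0 ≤ pol s a) (hpol1 : ∀ s, ∑ a, pol s a = 1)
    (hγ0 : 0 ≤ γ) (hγ1 : γ < 1) (hρ0 : ∀ s, 0 ≤ ρ0 s) (s' : S) :
    dVisit P γ ρ0 pol s' = (1 - γ) * ρ0 s'
      + γ * ∑ s, dVisit P γ ρ0 pol s * transMat P pol s s' := by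
  set M := transMat P pol with hM
  set y : ℕ → S → ℝ := fun t u => ∑ s0, ρ0 s0 * (M ^ t) s0 u with hydef
  have hsum : ∀ u, Summable (fun t : ℕ => γ ^ t * y t u) :=
    fun u => summable_d hP0 hP1 hpol0 hpol1 hγ0 hγ1 hρ0 u
  have hy0 : y 0 s' = ρ0 s' := by simp [hydef, Matrix.one_apply]
  have hysucc : ∀ t (u : S), y (t+1) u = ∑ s, y t s * M s u := by
    intro t u
    simp only [hydef, pow_succ, Matrix.mul_apply, Finset.mul_sum, Finset.sum_mul]
    rw [Finset.sum_comm]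
    apply Finset.sum_congr rfl
    intro s _
    apply Finset.sum_congr rfl
    intro s0 _
    ring
  have hd : ∀ u, dVisit P γ ρ0 pol u = (1 - γ) * ∑' t : ℕ, γ ^ t * y t u := fun u => rfl
  rw [hd, Summable.tsum_eq_zero_add (hsum s')]
  have h2 : (∑' t : ℕ, γ ^ (t+1) * y (t+1) s')
      = γ * ∑ s, ((1-γ)⁻¹ * dVisit P γ ρ0 pol s) * M s s' := by
    have h1 : ∀ t : ℕ, γ ^ (t+1) * y (t+1) s' = ∑ s, M s s' * (γ * (γ ^ t * y t s)) := by
      intro t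
      rw [hysucc t s', Finset.mul_sum]
      apply Finset.sum_congr rfl
      intro s _
      ring
    rw [tsum_congr h1, Summable.tsum_finsetSum (fun s _ => (((hsum s).mul_left γ).mul_left (M s s'))),
      Finset.mul_sum]
    apply Finset.sum_congr rfl
    intro s _
    rw [tsum_mul_left, tsum_mul_left, hd]
    have hne : (1 - γ) ≠ 0 := by intro h; linarith [hγ1]
    field_simp
  rw [h2, pow_zero, one_mul, hy0]
  have hne : (1 - γ) ≠ 0 := by intro h; linarith [hγ1]
  rw [mul_add]
  congr 1
  simp only [Finset.mul_sum]
  apply Finset.sum_congr rfl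
  intro s _
  field_simp

lemma dVisit_dot_reward (hP0 : ∀ s a s', 0 ≤ P s a s') (hP1 : ∀ s a, ∑ s', P s a s' = 1)
    (hpol0 : ∀ s a, 0 ≤ pol s a) (hpol1 : ∀ s, ∑ a, pol s a = 1)
    (hγ0 : 0 ≤ γ) (hγ1 : γ < 1) (hρ0 : ∀ s, 0 ≤ ρ0 s) (F : S → A → ℝ) :
    ∑ s, dVisit P γ ρ0 pol s * (∑ a, pol s a * F s a) = (1 - γ) * Jret P γ ρ0 F pol := by
  set M := transMat P pol with hM
  set r : S → ℝ := fun s' => ∑ a, pol s' a * F s' a with hr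
  unfold dVisit Jret
  have lhs_eq : ∑ s, ((1 - γ) * ∑' t : ℕ, γ ^ t * ∑ s0, ρ0 s0 * (M ^ t) s0 s) * r s
      = (1 - γ) * ∑ s, ∑' t : ℕ, γ ^ t * (∑ s0, ρ0 s0 * (M ^ t) s0 s) * r s := by
    rw [Finset.mul_sum]
    apply Finset.sum_congr rfl
    intro s _
    rw [mul_assoc, ← tsum_mul_right]
  rw [lhs_eq]
  congr 1
  rw [← Summable.tsum_finsetSum (fun s _ => by
    have := (summable_d hP0 hP1 hpol0 hpol1 hγ0 hγ1 hρ0 s).mul_right (r s)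
    apply this.congr
    intro t
    ring)]
  have rhs_eq : ∀ s0, ρ0 s0 * Vfun P γ F pol s0
      = ∑' t : ℕ, γ ^ t * (ρ0 s0 * ∑ s, (M ^ t) s0 s * r s) := by
    intro s0
    rw [Vfun_eq_tsum, ← tsum_mul_left]
    apply tsum_congr
    intro t
    ring
  rw [Finset.sum_congr rfl fun s0 _ => rhs_eq s0,
    ← Summable.tsum_finsetSum (fun s0 _ => by
      have := (summable_V hP0 hP1 hpol0 hpol1 hγ0 hγ1 r s0).mul_left (ρ0 s0)
      apply this.congr
      intro t
      ring)]
  apply tsum_congr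
  intro t
  simp only [Finset.sum_mul, Finset.mul_sum]
  rw [Finset.sum_comm]
  apply Finset.sum_congr rfl
  intro s0 _
  apply Finset.sum_congr rfl
  intro s _
  ring

end MDPd
section MDPmain

variable {S A : Type*} [Fintype S] [DecidableEq S] [Fintype A]
variable {P : S → A → S → ℝ} {pol pol' : S → A → ℝ} {γ : ℝ} {ρ0 : S → ℝ}

lemma adv_identity (hpol'1 : ∀ s, ∑ a, pol' s a = 1) (F : S → A → ℝ) (s : S) :
    ∑ a, pol' s a * Adv P γ F pol s a
      = (∑ a, pol' s a * F s a)
        + γ * ∑ s', transMat P pol' s s' * Vfun P γ F pol s' - Vfun P γ F pol s := by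
  have h1 : ∀ a, pol' s a * Adv P γ F pol s a
      = pol' s a * F s a + γ * (pol' s a * ∑ s', P s a s' * Vfun P γ F pol s')
        - pol' s a * Vfun P γ F pol s := by
    intro a
    unfold Adv Qfun
    ring
  rw [Finset.sum_congr rfl fun a _ => h1 a, Finset.sum_sub_distrib, Finset.sum_add_distrib,
    ← Finset.sum_mul, hpol'1 s, one_mul, ← Finset.mul_sum]
  congr 2
  unfold transMat
  simp only [Finset.mul_sum, Finset.sum_mul]
  rw [Finset.sum_comm]
  apply Finset.sum_congr rfl
  intro s' _
  apply Finset.sum_congr rfl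
  intro a _
  ring

lemma perf_diff (hP0 : ∀ s a s', 0 ≤ P s a s') (hP1 : ∀ s a, ∑ s', P s a s' = 1)
    (hpol0 : ∀ s a, 0 ≤ pol s a) (hpol1 : ∀ s, ∑ a, pol s a = 1)
    (hpol'0 : ∀ s a, 0 ≤ pol' s a) (hpol'1 : ∀ s, ∑ a, pol' s a = 1)
    (hγ0 : 0 ≤ γ) (hγ1 : γ < 1) (hρ0 : ∀ s, 0 ≤ ρ0 s) (F : S → A → ℝ) :
    (1 - γ) * (Jret P γ ρ0 F pol' - Jret P γ ρ0 F pol)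
      = ∑ s, dVisit P γ ρ0 pol' s * ∑ a, pol' s a * Adv P γ F pol s a := by
  have hsummand : ∀ s, dVisit P γ ρ0 pol' s * ∑ a, pol' s a * Adv P γ F pol s a
      = dVisit P γ ρ0 pol' s * (∑ a, pol' s a * F s a)
        + γ * ∑ s', dVisit P γ ρ0 pol' s * (transMat P pol' s s' * Vfun P γ F pol s')
        - dVisit P γ ρ0 pol' s * Vfun P γ F pol s := by
    intro s
    rw [adv_identity hpol'1 F s, mul_sub, mul_add]
    have h2 : dVisit P γ ρ0 pol' s * (γ * ∑ s', transMat P pol' s s' * Vfun P γ F pol s')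
        = γ * ∑ s', dVisit P γ ρ0 pol' s * (transMat P pol' s s' * Vfun P γ F pol s') := by
      simp only [Finset.mul_sum]
      exact Finset.sum_congr rfl fun s' _ => by ring
    rw [h2]
  rw [Finset.sum_congr rfl fun s _ => hsummand s, Finset.sum_sub_distrib,
    Finset.sum_add_distrib]
  have hterm1 : ∑ s, dVisit P γ ρ0 pol' s * (∑ a, pol' s a * F s a)
      = (1 - γ) * Jret P γ ρ0 F pol' :=
    dVisit_dot_reward hP0 hP1 hpol'0 hpol'1 hγ0 hγ1 hρ0 F
  have hterm2 : ∑ s, γ * ∑ s', dVisit P γ ρ0 pol' s * (transMat P pol' s s' * Vfun P γ F pol s')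
      = ∑ s', (dVisit P γ ρ0 pol' s' - (1 - γ) * ρ0 s') * Vfun P γ F pol s' := by
    calc ∑ s, γ * ∑ s', dVisit P γ ρ0 pol' s * (transMat P pol' s s' * Vfun P γ F pol s')
        = ∑ s', (γ * ∑ s, dVisit P γ ρ0 pol' s * transMat P pol' s s')
            * Vfun P γ F pol s' := by
          simp only [Finset.mul_sum]
          rw [Finset.sum_comm]
          refine Finset.sum_congr rfl fun s' _ => ?_
          rw [Finset.sum_mul]
          refine Finset.sum_congr rfl fun s _ => by ring
      _ = ∑ s', (dVisit P γ ρ0 pol' s' - (1 - γ) * ρ0 s') * Vfun P γ F pol s' := by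
          refine Finset.sum_congr rfl fun s' _ => ?_
          congr 1
          have := dVisit_flow (pol := pol') hP0 hP1 hpol'0 hpol'1 hγ0 hγ1 hρ0 s'
          linarith
  rw [hterm1, hterm2]
  have hterm3 : ∑ s', (dVisit P γ ρ0 pol' s' - (1 - γ) * ρ0 s') * Vfun P γ F pol s'
      = (∑ s', dVisit P γ ρ0 pol' s' * Vfun P γ F pol s') - (1 - γ) * Jret P γ ρ0 F pol := by
    unfold Jret
    rw [Finset.mul_sum, ← Finset.sum_sub_distrib]
    refine Finset.sum_congr rfl fun s' _ => by ring
  rw [hterm3]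
  ring

lemma dVisit_diff_bound (hP0 : ∀ s a s', 0 ≤ P s a s') (hP1 : ∀ s a, ∑ s', P s a s' = 1)
    (hpol0 : ∀ s a, 0 ≤ pol s a) (hpol1 : ∀ s, ∑ a, pol s a = 1)
    (hpol'0 : ∀ s a, 0 ≤ pol' s a) (hpol'1 : ∀ s, ∑ a, pol' s a = 1)
    (hγ0 : 0 ≤ γ) (hγ1 : γ < 1) (hρ0 : ∀ s, 0 ≤ ρ0 s) :
    (1 - γ) * ∑ s', |dVisit P γ ρ0 pol' s' - dVisit P γ ρ0 pol s'|
      ≤ γ * ∑ s, dVisit P γ ρ0 pol s * ∑ a, |pol' s a - pol s a| := by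
  set d : S → ℝ := fun s => dVisit P γ ρ0 pol s with hd
  set d' : S → ℝ := fun s => dVisit P γ ρ0 pol' s with hd'
  set M := transMat P pol with hM
  set M' := transMat P pol' with hM'
  have hd0 : ∀ s, 0 ≤ d s := fun s => dVisit_nonneg hP0 hpol0 hγ1.le hρ0 hγ0 s
  have he : ∀ s', d' s' - d s'
      = γ * (∑ s, (d' s - d s) * M' s s' + ∑ s, d s * (M' s s' - M s s')) := by
    intro s'
    have h1 := dVisit_flow (pol := pol') hP0 hP1 hpol'0 hpol'1 hγ0 hγ1 hρ0 s'
    have h2 := dVisit_flow (pol := pol) hP0 hP1 hpol0 hpol1 hγ0 hγ1 hρ0 s'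
    show dVisit P γ ρ0 pol' s' - dVisit P γ ρ0 pol s'
      = γ * (∑ s, (dVisit P γ ρ0 pol' s - dVisit P γ ρ0 pol s) * transMat P pol' s s'
          + ∑ s, dVisit P γ ρ0 pol s * (transMat P pol' s s' - transMat P pol s s'))
    rw [h1, h2]
    have h3 : ∑ s, (dVisit P γ ρ0 pol' s - dVisit P γ ρ0 pol s) * transMat P pol' s s'
          + ∑ s, dVisit P γ ρ0 pol s * (transMat P pol' s s' - transMat P pol s s')
        = ∑ s, dVisit P γ ρ0 pol' s * transMat P pol' s s'
          - ∑ s, dVisit P γ ρ0 pol s * transMat P pol s s' := by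
      rw [← Finset.sum_add_distrib, ← Finset.sum_sub_distrib]
      exact Finset.sum_congr rfl fun s _ => by ring
    rw [h3]
    ring
  -- pointwise bound
  have hptw : ∀ s', |d' s' - d s'|
      ≤ γ * ((∑ s, |d' s - d s| * M' s s') + ∑ s, d s * |M' s s' - M s s'|) := by
    intro s'
    rw [he s', abs_mul, abs_of_nonneg hγ0]
    apply mul_le_mul_of_nonneg_left _ hγ0
    calc |∑ s, (d' s - d s) * M' s s' + ∑ s, d s * (M' s s' - M s s')|
        ≤ |∑ s, (d' s - d s) * M' s s'| + |∑ s, d s * (M' s s' - M s s')| := abs_add_le _ _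
      _ ≤ (∑ s, |d' s - d s| * M' s s') + ∑ s, d s * |M' s s' - M s s'| := by
          apply add_le_add
          · refine (Finset.abs_sum_le_sum_abs _ _).trans (Finset.sum_le_sum fun s _ => ?_)
            rw [abs_mul, abs_of_nonneg (show (0:ℝ) ≤ M' s s' from Finset.sum_nonneg fun a _ =>
              mul_nonneg (hpol'0 s a) (hP0 s a s'))]
          · refine (Finset.abs_sum_le_sum_abs _ _).trans (Finset.sum_le_sum fun s _ => ?_)
            rw [abs_mul, abs_of_nonneg (hd0 s)]
  -- sum over s'
  have hsum : ∑ s', |d' s' - d s'|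
      ≤ γ * ((∑ s, |d' s - d s|) + ∑ s, d s * ∑ s', |M' s s' - M s s'|) := by
    calc ∑ s', |d' s' - d s'|
        ≤ ∑ s', γ * ((∑ s, |d' s - d s| * M' s s') + ∑ s, d s * |M' s s' - M s s'|) :=
          Finset.sum_le_sum fun s' _ => hptw s'
      _ = γ * ((∑ s, |d' s - d s| * ∑ s', M' s s') + ∑ s, d s * ∑ s', |M' s s' - M s s'|) := by
          rw [← Finset.mul_sum]
          congr 1
          rw [Finset.sum_add_distrib]
          congr 1
          · rw [Finset.sum_comm]
            exact Finset.sum_congr rfl fun s _ => (Finset.mul_sum _ _ _).symm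
          · rw [Finset.sum_comm]
            exact Finset.sum_congr rfl fun s _ => (Finset.mul_sum _ _ _).symm
      _ = γ * ((∑ s, |d' s - d s|) + ∑ s, d s * ∑ s', |M' s s' - M s s'|) := by
          congr 2
          refine Finset.sum_congr rfl fun s _ => ?_
          rw [transMat_rowsum hP1 hpol'1 s, mul_one]
  -- M row TV bound
  have hMTV : ∀ s, ∑ s', |M' s s' - M s s'| ≤ ∑ a, |pol' s a - pol s a| := by
    intro s
    calc ∑ s', |M' s s' - M s s'|
        = ∑ s', |∑ a, (pol' s a - pol s a) * P s a s'| := by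
          refine Finset.sum_congr rfl fun s' _ => ?_
          congr 1
          simp only [hM, hM', transMat, ← Finset.sum_sub_distrib]
          exact Finset.sum_congr rfl fun a _ => by ring
      _ ≤ ∑ s', ∑ a, |pol' s a - pol s a| * P s a s' := by
          refine Finset.sum_le_sum fun s' _ => ?_
          refine (Finset.abs_sum_le_sum_abs _ _).trans (Finset.sum_le_sum fun a _ => ?_)
          rw [abs_mul, abs_of_nonneg (hP0 s a s')]
      _ = ∑ a, |pol' s a - pol s a| := by
          rw [Finset.sum_comm]
          refine Finset.sum_congr rfl fun a _ => ?_
          rw [← Finset.mul_sum, hP1 s a, mul_one]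
  have hfin : ∑ s, d s * ∑ s', |M' s s' - M s s'| ≤ ∑ s, d s * ∑ a, |pol' s a - pol s a| :=
    Finset.sum_le_sum fun s _ => mul_le_mul_of_nonneg_left (hMTV s) (hd0 s)
  nlinarith [hsum, hfin, Finset.sum_nonneg (fun s (_ : s ∈ Finset.univ) =>
    abs_nonneg (d' s - d s)), hγ0]

end MDPmain
end Auxiliary

/-- per-step interior-point cost update bound. -/
theorem interior_point_cost_step_bound {S A : Type*} [Fintype S] [DecidableEq S] [Fintype A] [Nonempty S] [Nonempty A]
    (P : S → A → S → ℝ) (hP0 : ∀ s a s', 0 ≤ P s a s') (hP1 : ∀ s a, ∑ s', P s a s' = 1)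
    (γ : ℝ) (hγ0 : 0 < γ) (hγ1 : γ < 1)
    (ρ0 : S → ℝ) (hρ0 : ∀ s, 0 ≤ ρ0 s) (hρ1 : ∑ s, ρ0 s = 1)
    (δ : ℝ) (hδ : 0 < δ) (t : ℝ) (ht : 0 < t) (C : S → A → ℝ)
    (pol : S → A → ℝ) (hpol0 : ∀ s a, 0 ≤ pol s a) (hpol1 : ∀ s, ∑ a, pol s a = 1) (pol' : S → A → ℝ) (hpol'0 : ∀ s a, 0 ≤ pol' s a) (hpol'1 : ∀ s, ∑ a, pol' s a = 1)
    (habs : ∀ s a, pol s a = 0 → pol' s a = 0)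
    (hKL : avgKL P γ ρ0 pol' pol ≤ δ)
    (hA : surrAdv P γ ρ0 C pol pol' ≤ 1 / t) :
    Jret P γ ρ0 C pol' - Jret P γ ρ0 C pol ≤
      1 / ((1 - γ) * t) + Real.sqrt (2 * δ) * γ * epsAdv P γ C pol pol' / (1 - γ) ^ 2 := by
  have hγ0' : (0:ℝ) ≤ γ := hγ0.le
  have h1γ : (0:ℝ) < 1 - γ := by linarith
  have hd0 : ∀ s, 0 ≤ dVisit P γ ρ0 pol s :=
    fun s => dVisit_nonneg hP0 hpol0 hγ1.le hρ0 hγ0' s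
  have habsg : ∀ s, |∑ a, pol' s a * Adv P γ C pol s a| ≤ epsAdv P γ C pol pol' := fun s =>
    Finset.le_sup' (fun s => |∑ a, pol' s a * Adv P γ C pol s a|) (Finset.mem_univ s)
  have hε0 : 0 ≤ epsAdv P γ C pol pol' :=
    le_trans (abs_nonneg _) (habsg (Classical.arbitrary S))
  have hPD := perf_diff hP0 hP1 hpol0 hpol1 hpol'0 hpol'1 hγ0' hγ1 hρ0 C
  -- split the surrogate
  have hsplit : ∑ s, dVisit P γ ρ0 pol' s * ∑ a, pol' s a * Adv P γ C pol s a
      ≤ 1/t + (∑ s, |dVisit P γ ρ0 pol' s - dVisit P γ ρ0 pol s|) * epsAdv P γ C pol pol' := by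
    have heq : ∑ s, dVisit P γ ρ0 pol' s * ∑ a, pol' s a * Adv P γ C pol s a
        = surrAdv P γ ρ0 C pol pol'
          + ∑ s, (dVisit P γ ρ0 pol' s - dVisit P γ ρ0 pol s)
              * ∑ a, pol' s a * Adv P γ C pol s a := by
      unfold surrAdv
      rw [← Finset.sum_add_distrib]
      exact Finset.sum_congr rfl fun s _ => by ring
    rw [heq]
    have h2 : ∑ s, (dVisit P γ ρ0 pol' s - dVisit P γ ρ0 pol s)
          * ∑ a, pol' s a * Adv P γ C pol s a
        ≤ (∑ s, |dVisit P γ ρ0 pol' s - dVisit P γ ρ0 pol s|) * epsAdv P γ C pol pol' := by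
      rw [Finset.sum_mul]
      refine Finset.sum_le_sum fun s _ => ?_
      calc (dVisit P γ ρ0 pol' s - dVisit P γ ρ0 pol s) * ∑ a, pol' s a * Adv P γ C pol s a
          ≤ |(dVisit P γ ρ0 pol' s - dVisit P γ ρ0 pol s) * ∑ a, pol' s a * Adv P γ C pol s a| :=
            le_abs_self _
        _ = |dVisit P γ ρ0 pol' s - dVisit P γ ρ0 pol s|
              * |∑ a, pol' s a * Adv P γ C pol s a| := abs_mul _ _
        _ ≤ |dVisit P γ ρ0 pol' s - dVisit P γ ρ0 pol s| * epsAdv P γ C pol pol' :=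
            mul_le_mul_of_nonneg_left (habsg s) (abs_nonneg _)
    linarith [hA]
  -- total variation of visitation distributions
  have hTVd : ∑ s, |dVisit P γ ρ0 pol' s - dVisit P γ ρ0 pol s|
      ≤ γ/(1-γ) * ∑ s, dVisit P γ ρ0 pol s * ∑ a, |pol' s a - pol s a| := by
    have := dVisit_diff_bound (pol := pol) (pol' := pol') hP0 hP1 hpol0 hpol1 hpol'0 hpol'1
      hγ0' hγ1 hρ0
    rw [div_mul_eq_mul_div, le_div_iff₀ h1γ]
    linarith
  -- pinsker pointwise
  have hpins : ∀ s, ∑ a, |pol' s a - pol s a| ≤ Real.sqrt (2 * klState pol' pol s) := by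
    intro s
    have hp := pinsker_fin (fun a => pol' s a) (fun a => pol s a) (hpol'0 s) (hpol0 s)
      (hpol'1 s) (hpol1 s) (fun a h => habs s a h)
    have hnn : 0 ≤ ∑ a, |pol' s a - pol s a| :=
      Finset.sum_nonneg fun a _ => abs_nonneg _
    have h2 : 0 ≤ 2 * klState pol' pol s := le_trans (sq_nonneg _) (by
      simpa [klState] using hp)
    exact (Real.le_sqrt hnn h2).2 (by simpa [klState] using hp)
  have hkl0 : ∀ s, 0 ≤ 2 * klState pol' pol s := by
    intro s
    have hp := pinsker_fin (fun a => pol' s a) (fun a => pol s a) (hpol'0 s) (hpol0 s)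
      (hpol'1 s) (hpol1 s) (fun a h => habs s a h)
    exact le_trans (sq_nonneg _) (by simpa [klState] using hp)
  -- jensen
  have hK : ∑ s, dVisit P γ ρ0 pol s * ∑ a, |pol' s a - pol s a| ≤ Real.sqrt (2*δ) := by
    calc ∑ s, dVisit P γ ρ0 pol s * ∑ a, |pol' s a - pol s a|
        ≤ ∑ s, dVisit P γ ρ0 pol s * Real.sqrt (2 * klState pol' pol s) :=
          Finset.sum_le_sum fun s _ => mul_le_mul_of_nonneg_left (hpins s) (hd0 s)
      _ ≤ Real.sqrt (∑ s, dVisit P γ ρ0 pol s * (2 * klState pol' pol s)) :=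
          jensen_sqrt _ _ hd0 (dVisit_sum_one hP0 hP1 hpol0 hpol1 hγ0' hγ1 hρ0 hρ1) hkl0
      _ ≤ Real.sqrt (2*δ) := by
          apply Real.sqrt_le_sqrt
          have : ∑ s, dVisit P γ ρ0 pol s * (2 * klState pol' pol s)
              = 2 * avgKL P γ ρ0 pol' pol := by
            unfold avgKL
            rw [Finset.mul_sum]
            exact Finset.sum_congr rfl fun s _ => by ring
          rw [this]
          linarith
  -- assemble
  have hchain : (1-γ) * (Jret P γ ρ0 C pol' - Jret P γ ρ0 C pol)
      ≤ 1/t + (γ/(1-γ) * Real.sqrt (2*δ)) * epsAdv P γ C pol pol' := by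
    rw [hPD]
    have hterm : (∑ s, |dVisit P γ ρ0 pol' s - dVisit P γ ρ0 pol s|) * epsAdv P γ C pol pol'
        ≤ (γ/(1-γ) * Real.sqrt (2*δ)) * epsAdv P γ C pol pol' := by
      apply mul_le_mul_of_nonneg_right _ hε0
      calc ∑ s, |dVisit P γ ρ0 pol' s - dVisit P γ ρ0 pol s|
          ≤ γ/(1-γ) * ∑ s, dVisit P γ ρ0 pol s * ∑ a, |pol' s a - pol s a| := hTVd
        _ ≤ γ/(1-γ) * Real.sqrt (2*δ) :=
            mul_le_mul_of_nonneg_left hK (by positivity)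
    linarith [hsplit]
  rw [← le_div_iff₀' h1γ] at hchain
  calc Jret P γ ρ0 C pol' - Jret P γ ρ0 C pol
      ≤ (1/t + (γ/(1-γ) * Real.sqrt (2*δ)) * epsAdv P γ C pol pol') / (1-γ) := hchain
    _ = 1 / ((1 - γ) * t) + Real.sqrt (2 * δ) * γ * epsAdv P γ C pol pol' / (1 - γ) ^ 2 := by
        field_simp
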